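/- arXiv:1605.07830 — 3 statements merged into one kernel-verified Lean document; each statement's English description precedes it below -/
import Mathlib

section
/- Fix i and suppose the i-th input is Gaussian with variance σ_i² > 0. Assume f ∈ L²(μ), ∂f/∂x_i ∈ L²(μ), D > 0, and that there are constants c, C ≥ 0 with c ≤ |∂f/∂x_i(x)| ≤ C for all x ∈ ℝ^d. Then σ_i² c² / D ≤ S_i^tot ≤ σ_i² C² / D. -/
open MeasureTheory ProbabilityTheory
open scoped NNReal

noncomputable section

/-- The partial derivative `∂f/∂x_i` at the point `x`. -/
def pderivI {d : ℕ} (f : (Fin d → ℝ) → ℝ) (i : Fin d) (x : Fin d → ℝ) : ℝ :=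
  deriv (fun t : ℝ => f (Function.update x i t)) (x i)

/-- `u_i(x) = f(x) − ∫_ℝ f(x₁,…,x_{i−1},t,x_{i+1},…,x_d) dμ_i(t)`, the sum of all ANOVA
terms of `f` depending on `x_i`, for independent inputs with marginal laws `μs j`. -/
def uCompM {d : ℕ} (μs : Fin d → Measure ℝ) (f : (Fin d → ℝ) → ℝ) (i : Fin d)
    (x : Fin d → ℝ) : ℝ :=
  f x - ∫ t, f (Function.update x i t) ∂(μs i)

/-- The total variance `D = ∫ f² dμ − (∫ f dμ)²` with respect to the product measure. -/
def totVarM {d : ℕ} (μs : Fin d → Measure ℝ) (f : (Fin d → ℝ) → ℝ) : ℝ :=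
  (∫ x, (f x) ^ 2 ∂(Measure.pi μs)) - (∫ x, f x ∂(Measure.pi μs)) ^ 2

/-- The total partial variance `D_i^tot = ∫ u_i² dμ`. -/
def DTotM {d : ℕ} (μs : Fin d → Measure ℝ) (f : (Fin d → ℝ) → ℝ) (i : Fin d) : ℝ :=
  ∫ x, (uCompM μs f i x) ^ 2 ∂(Measure.pi μs)

/-- The total Sobol' sensitivity index `S_i^tot = D_i^tot / D`. -/
def STotM {d : ℕ} (μs : Fin d → Measure ℝ) (f : (Fin d → ℝ) → ℝ) (i : Fin d) : ℝ :=
  DTotM μs f i / totVarM μs f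

/-- The DGSM `ν_i = ∫ (∂f/∂x_i)² dμ`. -/
def nuM {d : ℕ} (μs : Fin d → Measure ℝ) (f : (Fin d → ℝ) → ℝ) (i : Fin d) : ℝ :=
  ∫ x, (pderivI f i x) ^ 2 ∂(Measure.pi μs)

/-- The DGSM `w_i = ∫ (∂f/∂x_i) dμ`. -/
def wM {d : ℕ} (μs : Fin d → Measure ℝ) (f : (Fin d → ℝ) → ℝ) (i : Fin d) : ℝ :=
  ∫ x, pderivI f i x ∂(Measure.pi μs)


section DGSMAuxSection
open Real Filter
open scoped ENNReal

namespace DGSMAux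

lemma tendsto_mul_exp_atTop {b : ℝ} (hb : 0 < b) :
    Tendsto (fun u : ℝ => u * rexp (-b * u ^ 2)) atTop (nhds 0) := by
  have h := (rpow_mul_exp_neg_mul_sq_isLittleO_exp_neg hb 1).trans_tendsto ?_
  · simpa [Real.rpow_one] using h
  · have : Tendsto (fun x : ℝ => -(1/2) * x) atTop atBot := by
      apply Tendsto.const_mul_atTop_of_neg (by norm_num) tendsto_id
    exact Real.tendsto_exp_atBot.comp this

lemma tendsto_mul_exp_atBot {b : ℝ} (hb : 0 < b) :
    Tendsto (fun u : ℝ => u * rexp (-b * u ^ 2)) atBot (nhds 0) := by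
  have h := (tendsto_mul_exp_atTop hb).comp tendsto_neg_atBot_atTop
  have h2 : (fun u : ℝ => -u * rexp (-b * (-u) ^ 2)) = fun u : ℝ => -(u * rexp (-b * u ^ 2)) := by
    funext u; ring_nf
  rw [Function.comp_def] at h
  simp only [h2] at h
  simpa using h.neg

lemma integrable_sq_mul_exp {b : ℝ} (hb : 0 < b) :
    Integrable (fun u : ℝ => u ^ 2 * rexp (-b * u ^ 2)) := by
  have h := integrable_rpow_mul_exp_neg_mul_sq hb (show (-1:ℝ) < 2 by norm_num)
  have : ∀ u : ℝ, u ^ (2:ℝ) = u ^ (2:ℕ) := fun u => by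
    rw [show ((2:ℝ)) = ((2:ℕ) : ℝ) by norm_num, Real.rpow_natCast]
  simpa [this] using h

lemma integral_sq_mul_exp {b : ℝ} (hb : 0 < b) :
    ∫ u : ℝ, u ^ 2 * rexp (-b * u ^ 2) = √(π / b) / (2 * b) := by
  set f : ℝ → ℝ := fun u => -(u * rexp (-b * u ^ 2)) / (2 * b) with hf
  have hderiv : ∀ u : ℝ, HasDerivAt f (u ^ 2 * rexp (-b * u ^ 2) - rexp (-b * u ^ 2) / (2 * b)) u := by
    intro u
    have h1 : HasDerivAt (fun u : ℝ => -b * u ^ 2) (-b * (2 * u)) u := by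
      simpa using ((hasDerivAt_pow 2 u).const_mul (-b))
    have h2 : HasDerivAt (fun u : ℝ => rexp (-b * u ^ 2)) (rexp (-b * u ^ 2) * (-b * (2 * u))) u := h1.exp
    have h3 : HasDerivAt (fun u : ℝ => u * rexp (-b * u ^ 2))
        (1 * rexp (-b * u ^ 2) + u * (rexp (-b * u ^ 2) * (-b * (2 * u)))) u :=
      (hasDerivAt_id u).mul h2
    have h4 := (h3.neg.div_const (2 * b))
    refine h4.congr_deriv ?_
    field_simp
    ring
  have hint : Integrable (fun u : ℝ => u ^ 2 * rexp (-b * u ^ 2) - rexp (-b * u ^ 2) / (2 * b)) :=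
    (integrable_sq_mul_exp hb).sub ((integrable_exp_neg_mul_sq hb).div_const _)
  have htop : Tendsto f atTop (nhds 0) := by
    simpa only [hf, neg_mul, neg_zero, zero_div] using ((tendsto_mul_exp_atTop hb).neg.div_const (2 * b))
  have hbot : Tendsto f atBot (nhds 0) := by
    simpa only [hf, neg_mul, neg_zero, zero_div] using ((tendsto_mul_exp_atBot hb).neg.div_const (2 * b))
  have h0 : ∫ u : ℝ, (u ^ 2 * rexp (-b * u ^ 2) - rexp (-b * u ^ 2) / (2 * b)) = 0 - 0 :=
    integral_of_hasDerivAt_of_tendsto hderiv hint hbot htop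
  have h1 : ∫ u : ℝ, u ^ 2 * rexp (-b * u ^ 2)
      = ∫ u : ℝ, ((u ^ 2 * rexp (-b * u ^ 2) - rexp (-b * u ^ 2) / (2 * b)) + rexp (-b * u ^ 2) / (2 * b)) := by
    congr 1; funext u; ring
  rw [h1, integral_add hint ((integrable_exp_neg_mul_sq hb).div_const _), h0,
    integral_div, integral_gaussian]
  ring

lemma integral_mul_exp_zero {b : ℝ} (hb : 0 < b) :
    ∫ u : ℝ, u * rexp (-b * u ^ 2) = 0 := by
  set f : ℝ → ℝ := fun u => -rexp (-b * u ^ 2) / (2 * b) with hf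
  have hderiv : ∀ u : ℝ, HasDerivAt f (u * rexp (-b * u ^ 2)) u := by
    intro u
    have h1 : HasDerivAt (fun u : ℝ => -b * u ^ 2) (-b * (2 * u)) u := by
      simpa using ((hasDerivAt_pow 2 u).const_mul (-b))
    have h2 := (h1.exp.neg.div_const (2 * b))
    refine h2.congr_deriv ?_
    field_simp
  have hint : Integrable (fun u : ℝ => u * rexp (-b * u ^ 2)) := integrable_mul_exp_neg_mul_sq hb
  have htop : Tendsto f atTop (nhds 0) := by
    have : Tendsto (fun u : ℝ => rexp (-b * u ^ 2)) atTop (nhds 0) := by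
      have h := (exp_neg_mul_sq_isLittleO_exp_neg hb).trans_tendsto tendsto_exp_neg_atTop_nhds_zero
      exact h
    simpa only [hf, neg_mul, neg_zero, zero_div] using (this.neg.div_const (2 * b))
  have hbot : Tendsto f atBot (nhds 0) := by
    have h := ((exp_neg_mul_sq_isLittleO_exp_neg hb).trans_tendsto
      tendsto_exp_neg_atTop_nhds_zero).comp tendsto_neg_atBot_atTop
    rw [Function.comp_def] at h
    have h2 : (fun u : ℝ => rexp (-b * (-u) ^ 2)) = fun u : ℝ => rexp (-b * u ^ 2) := by
      funext u; ring_nf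
    rw [h2] at h
    simpa only [hf, neg_mul, neg_zero, zero_div] using (h.neg.div_const (2 * b))
  have h0 := integral_of_hasDerivAt_of_tendsto hderiv hint hbot htop
  simpa using h0





variable {m : ℝ} {v : ℝ≥0}

lemma gaussian_integral_transfer (hv : v ≠ 0) (h : ℝ → ℝ) :
    ∫ t, h t ∂(gaussianReal m v) = ∫ t, gaussianPDFReal m v t * h t := by
  rw [gaussianReal_of_var_ne_zero m hv]
  have hpdf : gaussianPDF m v = fun x => ((gaussianPDFReal m v x).toNNReal : ℝ≥0∞) := by
    funext x; simp only [gaussianPDF_def]; rfl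
  rw [hpdf, integral_withDensity_eq_integral_smul ((measurable_gaussianPDFReal m v).real_toNNReal)]
  congr 1; funext x
  rw [NNReal.smul_def, smul_eq_mul, Real.coe_toNNReal _ (gaussianPDFReal_nonneg m v x)]

lemma gaussian_integrable_transfer (hv : v ≠ 0) {h : ℝ → ℝ}
    (hi : Integrable (fun x => h x * gaussianPDFReal m v x)) :
    Integrable h (gaussianReal m v) := by
  rw [gaussianReal_of_var_ne_zero m hv,
    integrable_withDensity_iff (measurable_gaussianPDF m v)
      (ae_of_all _ fun x => ENNReal.ofReal_lt_top)]
  refine hi.congr (ae_of_all _ fun x => ?_)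
  simp only [gaussianPDF_def]
  rw [ENNReal.toReal_ofReal (gaussianPDFReal_nonneg m v x)]

lemma coe_v_pos (hv : v ≠ 0) : (0:ℝ) < v :=
  NNReal.coe_pos.mpr (pos_iff_ne_zero.mpr hv)

lemma pdf_mul_rearrange (hv : v ≠ 0) (g : ℝ → ℝ) :
    (fun t => g t * gaussianPDFReal m v t)
      = fun t => (√(2 * π * v))⁻¹ * (g t * rexp (-(2 * (v:ℝ))⁻¹ * (t - m) ^ 2)) := by
  funext t
  rw [gaussianPDFReal]
  have harg : -(t - m) ^ 2 / (2 * (v:ℝ)) = -(2 * (v:ℝ))⁻¹ * (t - m) ^ 2 := by ring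
  rw [harg]; ring

lemma integrable_sq_sub_gaussian (hv : v ≠ 0) :
    Integrable (fun t => (t - m) ^ 2) (gaussianReal m v) := by
  have hb : (0:ℝ) < (2 * (v:ℝ))⁻¹ := by
    have := coe_v_pos (v := v) hv; positivity
  refine gaussian_integrable_transfer hv ?_
  rw [pdf_mul_rearrange hv]
  exact (((integrable_sq_mul_exp hb).comp_sub_right m).const_mul _)

lemma integral_sq_sub_gaussian (hv : v ≠ 0) :
    ∫ t, (t - m) ^ 2 ∂(gaussianReal m v) = v := by
  have hv' := coe_v_pos (v := v) hv
  have hb : (0:ℝ) < (2 * (v:ℝ))⁻¹ := by positivity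
  rw [gaussian_integral_transfer hv]
  have : (fun t => gaussianPDFReal m v t * (t - m) ^ 2)
      = fun t => (√(2 * π * v))⁻¹ * ((fun u => u ^ 2 * rexp (-(2 * (v:ℝ))⁻¹ * u ^ 2)) (t - m)) := by
    have h := pdf_mul_rearrange (m := m) hv (fun t => (t - m) ^ 2)
    funext t
    have ht := congrFun h t
    simp only [mul_comm] at ht ⊢
    exact ht
  have hsub := integral_sub_right_eq_self (μ := volume)
    (fun u => u ^ 2 * rexp (-(2 * (v:ℝ))⁻¹ * u ^ 2)) m
  rw [this, integral_const_mul, hsub, integral_sq_mul_exp hb]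
  have h1 : π / (2 * (v:ℝ))⁻¹ = 2 * π * v := by field_simp
  have h2 : (2 : ℝ) * (2 * (v:ℝ))⁻¹ = (v:ℝ)⁻¹ := by field_simp
  rw [h1, h2]
  have h3 : √(2 * π * v) ≠ 0 := by positivity
  field_simp

lemma integrable_sub_gaussian (hv : v ≠ 0) :
    Integrable (fun t => t - m) (gaussianReal m v) := by
  refine Integrable.mono' ((integrable_const (1:ℝ)).add (integrable_sq_sub_gaussian hv))
    ((continuous_id.sub continuous_const).aestronglyMeasurable) (ae_of_all _ fun t => ?_)
  show |t - m| ≤ 1 + (t - m) ^ 2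
  nlinarith [sq_abs (t - m), sq_nonneg (|t - m| - 1), abs_nonneg (t - m)]

lemma integral_sub_gaussian (hv : v ≠ 0) :
    ∫ t, (t - m) ∂(gaussianReal m v) = 0 := by
  have hv' := coe_v_pos (v := v) hv
  have hb : (0:ℝ) < (2 * (v:ℝ))⁻¹ := by positivity
  rw [gaussian_integral_transfer hv]
  have : (fun t => gaussianPDFReal m v t * (t - m))
      = fun t => (√(2 * π * v))⁻¹ * ((fun u => u * rexp (-(2 * (v:ℝ))⁻¹ * u ^ 2)) (t - m)) := by
    have h := pdf_mul_rearrange (m := m) hv (fun t => t - m)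
    funext t
    have ht := congrFun h t
    simp only [mul_comm] at ht ⊢
    exact ht
  have hsub := integral_sub_right_eq_self (μ := volume)
    (fun u => u * rexp (-(2 * (v:ℝ))⁻¹ * u ^ 2)) m
  rw [this, integral_const_mul, hsub, integral_mul_exp_zero hb, mul_zero]



lemma lip_upper {g : ℝ → ℝ} {C : ℝ} (hC : 0 ≤ C) (hg : Differentiable ℝ g)
    (hb : ∀ t, |deriv g t| ≤ C) : ∀ s t : ℝ, |g s - g t| ≤ C * |s - t| := by
  intro s t
  have hlip := lipschitzWith_of_nnnorm_deriv_le (C := C.toNNReal) hg (fun x => ?_)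
  · have hd := hlip.dist_le_mul s t
    simpa [Real.dist_eq, Real.coe_toNNReal _ hC] using hd
  · rw [← NNReal.coe_le_coe, coe_nnnorm, Real.norm_eq_abs, Real.coe_toNNReal _ hC]
    exact hb x

lemma lip_lower_of_deriv_ge {g : ℝ → ℝ} {c : ℝ} (hc : 0 ≤ c) (hg : Differentiable ℝ g)
    (hd : ∀ t, c ≤ deriv g t) : ∀ s t : ℝ, c * |s - t| ≤ |g s - g t| := by
  have key : ∀ s t : ℝ, t ≤ s → c * (s - t) ≤ g s - g t := by
    intro s t hts
    have hGdiff : Differentiable ℝ (fun x : ℝ => g x - c * x) :=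
      hg.sub ((differentiable_id.const_mul c))
    have hGderiv : ∀ x : ℝ, deriv (fun x : ℝ => g x - c * x) x = deriv g x - c := by
      intro x
      have h1 : HasDerivAt (fun x : ℝ => g x - c * x) (deriv g x - c * 1) x :=
        (hg x).hasDerivAt.sub ((hasDerivAt_id x).const_mul c)
      simpa using h1.deriv
    have hmono : Monotone (fun x : ℝ => g x - c * x) := by
      apply monotone_of_deriv_nonneg hGdiff
      intro x; rw [hGderiv x]; linarith [hd x]
    have := hmono hts
    simp only at this
    linarith
  intro s t
  rcases le_total t s with h | h
  · have h1 := key s t h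
    have h2 : c * |s - t| = c * (s - t) := by rw [abs_of_nonneg (by linarith)]
    rw [h2]
    exact h1.trans (le_abs_self _)
  · have h1 := key t s h
    have h2 : c * |s - t| = c * (t - s) := by
      rw [abs_of_nonpos (by linarith)]; ring
    rw [h2, abs_sub_comm]
    exact h1.trans (le_abs_self _)

lemma lip_lower {g : ℝ → ℝ} {c : ℝ} (hc : 0 ≤ c) (hg : Differentiable ℝ g)
    (hcont : Continuous (deriv g)) (hd : ∀ t, c ≤ |deriv g t|) :
    ∀ s t : ℝ, c * |s - t| ≤ |g s - g t| := by
  rcases eq_or_lt_of_le hc with h0 | hcpos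
  · intro s t; rw [← h0]; simpa using abs_nonneg _
  have key : ∀ a b : ℝ, c ≤ deriv g a → deriv g b ≤ -c → False := by
    intro a b ha hb
    have h0mem : (0:ℝ) ∈ Set.uIcc (deriv g b) (deriv g a) := by
      rw [Set.mem_uIcc]; left; constructor <;> linarith
    obtain ⟨s, -, hs⟩ := intermediate_value_uIcc (a := b) (b := a) hcont.continuousOn h0mem
    have := hd s
    rw [hs] at this
    simp at this
    linarith
  have hdich : (∀ t, c ≤ deriv g t) ∨ (∀ t, deriv g t ≤ -c) := by
    by_cases h1 : c ≤ deriv g 0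
    · left; intro t
      rcases le_abs.mp (hd t) with h | h
      · exact h
      · exact absurd (key 0 t h1 (by linarith)) (fun x => x)
    · right; intro t
      push_neg at h1
      have h0 : deriv g 0 ≤ -c := by
        rcases le_abs.mp (hd 0) with h | h
        · linarith
        · linarith
      rcases le_abs.mp (hd t) with h | h
      · exact absurd (key t 0 h h0) (fun x => x)
      · linarith
  rcases hdich with h | h
  · exact lip_lower_of_deriv_ge hc hg h
  · intro s t
    have hneg : Differentiable ℝ (fun x => -g x) := hg.neg
    have hdneg : ∀ x, c ≤ deriv (fun x => -g x) x := by
      intro x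
      rw [deriv.fun_neg]
      linarith [h x]
    have := lip_lower_of_deriv_ge hc hneg hdneg s t
    calc c * |s - t| ≤ |(fun x => -g x) s - (fun x => -g x) t| := this
    _ = |g s - g t| := by simp only; rw [← abs_neg]; ring_nf

lemma integrable_fst_sq {ν : Measure ℝ} [IsProbabilityMeasure ν] {h : ℝ → ℝ}
    (hc : Continuous h) (hi : Integrable h ν) :
    Integrable (fun p : ℝ × ℝ => h p.1) (ν.prod ν) := by
  have hmap : (ν.prod ν).map Prod.fst = ν := by
    rw [Measure.map_fst_prod]; simp
  have hi' : Integrable h ((ν.prod ν).map Prod.fst) := by rw [hmap]; exact hi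
  exact (integrable_map_measure (by rw [hmap]; exact hc.aestronglyMeasurable)
    measurable_fst.aemeasurable).mp hi'

lemma integrable_snd_sq {ν : Measure ℝ} [IsProbabilityMeasure ν] {h : ℝ → ℝ}
    (hc : Continuous h) (hi : Integrable h ν) :
    Integrable (fun p : ℝ × ℝ => h p.2) (ν.prod ν) := by
  have hmap : (ν.prod ν).map Prod.snd = ν := by
    rw [Measure.map_snd_prod]; simp
  have hi' : Integrable h ((ν.prod ν).map Prod.snd) := by rw [hmap]; exact hi
  exact (integrable_map_measure (by rw [hmap]; exact hc.aestronglyMeasurable)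
    measurable_snd.aemeasurable).mp hi'

lemma doubling {ν : Measure ℝ} [IsProbabilityMeasure ν] {h : ℝ → ℝ}
    (h1 : Integrable h ν) (h2 : Integrable (fun t => h t ^ 2) ν)
    (hprod : Integrable (fun p : ℝ × ℝ => (h p.1 - h p.2) ^ 2) (ν.prod ν)) :
    ∫ p : ℝ × ℝ, (h p.1 - h p.2) ^ 2 ∂(ν.prod ν)
      = 2 * ((∫ t, h t ^ 2 ∂ν) - (∫ t, h t ∂ν) ^ 2) := by
  set I1 := ∫ t, h t ∂ν with hI1
  set I2 := ∫ t, h t ^ 2 ∂ν with hI2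
  rw [integral_prod _ hprod]
  have inner : ∀ s, ∫ t, (h s - h t) ^ 2 ∂ν = (h s ^ 2 - 2 * I1 * h s) + I2 := by
    intro s
    have heq : (fun t : ℝ => (h s - h t) ^ 2)
        = fun t => (h s ^ 2 + -(2 * h s) * h t) + h t ^ 2 := by funext t; ring
    have iA : Integrable (fun t => h s ^ 2 + -(2 * h s) * h t) ν := by
      exact (integrable_const _).add (h1.const_mul _)
    rw [heq, integral_add iA h2, integral_add (integrable_const _) (h1.const_mul _),
      integral_const, integral_const_mul]
    simp [measure_univ, ← hI1, ← hI2]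
    ring
  simp_rw [inner]
  have iB : Integrable (fun s => h s ^ 2 - 2 * I1 * h s) ν := by
    exact h2.sub (h1.const_mul _)
  have iC : Integrable (fun s => 2 * I1 * h s) ν := by exact h1.const_mul _
  rw [integral_add iB (integrable_const _), integral_sub h2 iC, integral_const,
    integral_const_mul]
  simp [measure_univ, ← hI1, ← hI2]
  ring




lemma var_sandwich {ν : Measure ℝ} [IsProbabilityMeasure ν] {g : ℝ → ℝ} {c C m σ2 : ℝ}
    (hgc : Continuous g) (hc : 0 ≤ c) (hC : 0 ≤ C)
    (hlow : ∀ s t : ℝ, c * |s - t| ≤ |g s - g t|) (hupp : ∀ s t : ℝ, |g s - g t| ≤ C * |s - t|)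
    (him : Integrable (fun t => t - m) ν) (hi2 : Integrable (fun t => (t - m) ^ 2) ν)
    (h1 : ∫ t, (t - m) ∂ν = 0) (h2 : ∫ t, (t - m) ^ 2 ∂ν = σ2) :
    σ2 * c ^ 2 ≤ (∫ t, g t ^ 2 ∂ν) - (∫ t, g t ∂ν) ^ 2 ∧
      (∫ t, g t ^ 2 ∂ν) - (∫ t, g t ∂ν) ^ 2 ≤ σ2 * C ^ 2 := by
  have habs : ∀ t : ℝ, |g t| ≤ |g m| + C * |t - m| := by
    intro t
    calc |g t| = |g m + (g t - g m)| := by ring_nf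
    _ ≤ |g m| + |g t - g m| := abs_add_le _ _
    _ ≤ |g m| + C * |t - m| := by linarith [hupp t m]
  have himabs : Integrable (fun t => |t - m|) ν := him.abs
  have hg1 : Integrable g ν := by
    refine Integrable.mono' ((integrable_const (|g m|)).add (himabs.const_mul C))
      hgc.aestronglyMeasurable (ae_of_all _ fun t => ?_)
    show |g t| ≤ |g m| + C * |t - m|
    exact habs t
  have hg2 : Integrable (fun t => g t ^ 2) ν := by
    refine Integrable.mono' (((integrable_const (g m ^ 2)).add
        (himabs.const_mul (2 * C * |g m|))).add (hi2.const_mul (C ^ 2)))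
      (hgc.pow 2).aestronglyMeasurable (ae_of_all _ fun t => ?_)
    show |g t ^ 2| ≤ (g m ^ 2 + 2 * C * |g m| * |t - m|) + C ^ 2 * (t - m) ^ 2
    rw [abs_of_nonneg (sq_nonneg (g t))]
    have hA := pow_le_pow_left₀ (abs_nonneg (g t)) (habs t) 2
    nlinarith [sq_abs (g t), sq_abs (t - m), sq_abs (g m), abs_nonneg (t - m), abs_nonneg (g m)]
  have hcont2 : Continuous (fun t : ℝ => (t - m) ^ 2) := by continuity
  have hfst := integrable_fst_sq hcont2 hi2
  have hsnd := integrable_snd_sq hcont2 hi2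
  have hqid : Integrable (fun p : ℝ × ℝ => (p.1 - p.2) ^ 2) (ν.prod ν) := by
    refine Integrable.mono' ((hfst.const_mul 2).add (hsnd.const_mul 2))
      ?_ (ae_of_all _ fun p => ?_)
    · exact ((continuous_fst.sub continuous_snd).pow 2).aestronglyMeasurable
    · show |(p.1 - p.2) ^ 2| ≤ 2 * (p.1 - m) ^ 2 + 2 * (p.2 - m) ^ 2
      rw [abs_of_nonneg (sq_nonneg _)]
      nlinarith [sq_nonneg ((p.1 - m) + (p.2 - m))]
  have hq : Integrable (fun p : ℝ × ℝ => (g p.1 - g p.2) ^ 2) (ν.prod ν) := by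
    refine Integrable.mono' (hqid.const_mul (C ^ 2))
      ?_ (ae_of_all _ fun p => ?_)
    · exact (((hgc.comp continuous_fst).sub (hgc.comp continuous_snd)).pow 2).aestronglyMeasurable
    · show |(g p.1 - g p.2) ^ 2| ≤ C ^ 2 * (p.1 - p.2) ^ 2
      rw [abs_of_nonneg (sq_nonneg _)]
      have := hupp p.1 p.2
      nlinarith [sq_abs (g p.1 - g p.2), sq_abs (p.1 - p.2), abs_nonneg (g p.1 - g p.2),
        abs_nonneg (p.1 - p.2)]
  have hdg := doubling hg1 hg2 hq
  have hidprod : Integrable (fun p : ℝ × ℝ => ((p.1 - m) - (p.2 - m)) ^ 2) (ν.prod ν) :=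
    hqid.congr (ae_of_all _ fun p => by ring_nf)
  have hdid := doubling him hi2 hidprod
  rw [h1, h2] at hdid
  rw [show (2:ℝ) * (σ2 - 0 ^ 2) = 2 * σ2 by ring] at hdid
  have hID : ∫ p : ℝ × ℝ, (p.1 - p.2) ^ 2 ∂(ν.prod ν) = 2 * σ2 := by
    rw [← hdid]
    exact integral_congr_ae (ae_of_all _ fun p => by ring)
  have hup : ∫ p : ℝ × ℝ, (g p.1 - g p.2) ^ 2 ∂(ν.prod ν)
      ≤ C ^ 2 * (2 * σ2) := by
    have := integral_mono hq (hqid.const_mul (C ^ 2)) (fun p => by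
      show (g p.1 - g p.2) ^ 2 ≤ C ^ 2 * (p.1 - p.2) ^ 2
      have := hupp p.1 p.2
      nlinarith [sq_abs (g p.1 - g p.2), sq_abs (p.1 - p.2), abs_nonneg (g p.1 - g p.2),
        abs_nonneg (p.1 - p.2)])
    rwa [integral_const_mul, hID] at this
  have hlo : c ^ 2 * (2 * σ2) ≤ ∫ p : ℝ × ℝ, (g p.1 - g p.2) ^ 2 ∂(ν.prod ν) := by
    have := integral_mono (hqid.const_mul (c ^ 2)) hq (fun p => by
      show c ^ 2 * (p.1 - p.2) ^ 2 ≤ (g p.1 - g p.2) ^ 2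
      have := hlow p.1 p.2
      nlinarith [sq_abs (g p.1 - g p.2), sq_abs (p.1 - p.2), abs_nonneg (g p.1 - g p.2),
        abs_nonneg (p.1 - p.2), mul_nonneg hc (abs_nonneg (p.1 - p.2))])
    rwa [integral_const_mul, hID] at this
  rw [hdg] at hup hlo
  constructor <;> linarith



lemma measurePreserving_update {d : ℕ} (μs : Fin d → Measure ℝ)
    [∀ j, IsProbabilityMeasure (μs j)] (i : Fin d) :
    MeasurePreserving (fun p : (Fin d → ℝ) × ℝ => Function.update p.1 i p.2)
      ((Measure.pi μs).prod (μs i)) (Measure.pi μs) := by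
  constructor
  · exact measurable_update'
  · refine (Measure.pi_eq fun s hs => ?_).symm
    rw [Measure.map_apply measurable_update' (MeasurableSet.univ_pi hs)]
    have hpre : (fun p : (Fin d → ℝ) × ℝ => Function.update p.1 i p.2) ⁻¹' (Set.univ.pi s)
        = (Set.univ.pi (Function.update s i Set.univ)) ×ˢ (s i) := by
      ext p
      simp only [Set.mem_preimage, Set.mem_pi, Set.mem_univ, forall_true_left, Set.mem_prod]
      constructor
      · intro h
        refine ⟨fun j => ?_, by simpa using h i⟩
        by_cases hj : j = i
        · subst hj; simp
        · have := h j
          rw [Function.update_of_ne hj] at this ⊢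
          exact this
      · rintro ⟨h1, h2⟩ j
        by_cases hj : j = i
        · subst hj; simpa using h2
        · have := h1 j
          rw [Function.update_of_ne hj] at this ⊢
          exact this
    rw [hpre, Measure.prod_prod, Measure.pi_pi]
    have hupd : ∀ j, μs j (Function.update s i Set.univ j)
        = Function.update (fun j => μs j (s j)) i 1 j := by
      intro j
      by_cases hj : j = i
      · subst hj; simp
      · rw [Function.update_of_ne hj, Function.update_of_ne hj]
    calc (∏ j, μs j (Function.update s i Set.univ j)) * μs i (s i)
        = (∏ j, Function.update (fun j => μs j (s j)) i 1 j) * μs i (s i) := by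
          rw [Finset.prod_congr rfl fun j _ => hupd j]
    _ = (∏ j ∈ Finset.univ.erase i, μs j (s j)) * μs i (s i) := by
          rw [Finset.prod_update_of_mem (Finset.mem_univ i), one_mul,
            Finset.sdiff_singleton_eq_erase]
    _ = ∏ j, μs j (s j) := by
          rw [mul_comm]
          exact Finset.mul_prod_erase Finset.univ (fun j => μs j (s j)) (Finset.mem_univ i)

lemma integrable_of_lip {ν : Measure ℝ} [IsProbabilityMeasure ν] {g : ℝ → ℝ} {C m : ℝ}
    (hgc : Continuous g) (hupp : ∀ s t : ℝ, |g s - g t| ≤ C * |s - t|)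
    (him : Integrable (fun t => t - m) ν) (hi2 : Integrable (fun t => (t - m) ^ 2) ν) :
    Integrable g ν ∧ Integrable (fun t => g t ^ 2) ν := by
  have habs : ∀ t : ℝ, |g t| ≤ |g m| + C * |t - m| := by
    intro t
    calc |g t| = |g m + (g t - g m)| := by ring_nf
    _ ≤ |g m| + |g t - g m| := abs_add_le _ _
    _ ≤ |g m| + C * |t - m| := by linarith [hupp t m]
  have himabs : Integrable (fun t => |t - m|) ν := him.abs
  constructor
  · refine Integrable.mono' ((integrable_const (|g m|)).add (himabs.const_mul C))
      hgc.aestronglyMeasurable (ae_of_all _ fun t => ?_)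
    show |g t| ≤ |g m| + C * |t - m|
    exact habs t
  · refine Integrable.mono' (((integrable_const (g m ^ 2)).add
        (himabs.const_mul (2 * C * |g m|))).add (hi2.const_mul (C ^ 2)))
      (hgc.pow 2).aestronglyMeasurable (ae_of_all _ fun t => ?_)
    show |g t ^ 2| ≤ (g m ^ 2 + 2 * C * |g m| * |t - m|) + C ^ 2 * (t - m) ^ 2
    rw [abs_of_nonneg (sq_nonneg (g t))]
    have hA := pow_le_pow_left₀ (abs_nonneg (g t)) (habs t) 2
    nlinarith [sq_abs (g t), sq_abs (t - m), sq_abs (g m), abs_nonneg (t - m), abs_nonneg (g m)]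

lemma inner_var {ν : Measure ℝ} [IsProbabilityMeasure ν] {g : ℝ → ℝ}
    (hg1 : Integrable g ν) (hg2 : Integrable (fun t => g t ^ 2) ν) :
    ∫ t, (g t - ∫ s, g s ∂ν) ^ 2 ∂ν = (∫ t, g t ^ 2 ∂ν) - (∫ t, g t ∂ν) ^ 2 := by
  set a := ∫ s, g s ∂ν with ha
  have heq : (fun t => (g t - a) ^ 2) = fun t => (g t ^ 2 + -(2 * a) * g t) + a ^ 2 := by
    funext t; ring
  have iA : Integrable (fun t => g t ^ 2 + -(2 * a) * g t) ν := by
    exact hg2.add (hg1.const_mul _)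
  rw [heq, integral_add iA (integrable_const _), integral_add hg2 (hg1.const_mul _),
    integral_const, integral_const_mul]
  simp [measure_univ, ← ha]
  ring

lemma u_bound {ν : Measure ℝ} [IsProbabilityMeasure ν] {g : ℝ → ℝ} {C m : ℝ}
    (hgc : Continuous g) (hupp : ∀ s t : ℝ, |g s - g t| ≤ C * |s - t|)
    (him : Integrable (fun t => t - m) ν) (hi2 : Integrable (fun t => (t - m) ^ 2) ν) (y : ℝ) :
    |g y - ∫ s, g s ∂ν| ≤ C * |y - m| + C * ∫ s, |s - m| ∂ν := by
  have hg1 := (integrable_of_lip hgc hupp him hi2).1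
  have hCnn : 0 ≤ C := by
    have := hupp (m + 1) m
    simp at this
    nlinarith [abs_nonneg (g (m+1) - g m)]
  have hrep : g y - ∫ s, g s ∂ν = ∫ s, (g y - g s) ∂ν := by
    rw [integral_sub (integrable_const _) hg1, integral_const]
    simp [measure_univ]
  rw [hrep]
  calc |∫ s, (g y - g s) ∂ν| ≤ ∫ s, |g y - g s| ∂ν := by
        simpa using norm_integral_le_integral_norm (fun s => g y - g s)
  _ ≤ ∫ s, (C * |y - m| + C * |s - m|) ∂ν := by
      refine integral_mono ((integrable_const (g y)).sub hg1).abs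
        ((integrable_const _).add (him.abs.const_mul C)) (fun s => ?_)
      calc |g y - g s| ≤ C * |y - s| := hupp y s
      _ ≤ C * (|y - m| + |s - m|) := by
          refine mul_le_mul_of_nonneg_left ?_ hCnn
          calc |y - s| = |(y - m) - (s - m)| := by ring_nf
          _ ≤ |y - m| + |s - m| := abs_sub _ _
      _ = C * |y - m| + C * |s - m| := by ring
  _ = C * |y - m| + C * ∫ s, |s - m| ∂ν := by
      rw [integral_add (integrable_const _) (him.abs.const_mul C), integral_const,
        integral_const_mul]
      simp [measure_univ]

end DGSMAux

end DGSMAuxSection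

open DGSMAux in
/-- **Theorem 7 (constant bounds for a normal input).** For independent inputs where the
`i`-th input is Gaussian with variance `σ_i² > 0`, if `f, ∂f/∂x_i ∈ L²(μ)`, `D > 0` and
`c ≤ |∂f/∂x_i| ≤ C` everywhere, then `σ_i² c² / D ≤ S_i^tot ≤ σ_i² C² / D`. -/
theorem dgsm_constant_bounds_normal (d : ℕ) (μs : Fin d → Measure ℝ)
    (hprob : ∀ j, IsProbabilityMeasure (μs j)) (i : Fin d)
    (mi : ℝ) (v : ℝ≥0) (hv : v ≠ 0) (hμi : μs i = gaussianReal mi v)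
    (f : (Fin d → ℝ) → ℝ) (hf : ContDiff ℝ 1 f)
    (hfL2 : MemLp f 2 (Measure.pi μs))
    (hdL2 : MemLp (pderivI f i) 2 (Measure.pi μs))
    (hD : 0 < totVarM μs f)
    (c C : ℝ) (hc : 0 ≤ c) (hC : 0 ≤ C)
    (hlow : ∀ x, c ≤ |pderivI f i x|) (hupp : ∀ x, |pderivI f i x| ≤ C) :
    (v : ℝ) * c ^ 2 / totVarM μs f ≤ STotM μs f i ∧
      STotM μs f i ≤ (v : ℝ) * C ^ 2 / totVarM μs f := by
  classical
  haveI : ∀ j, IsProbabilityMeasure (μs j) := hprob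
  haveI : IsProbabilityMeasure (Measure.pi μs) := by infer_instance
  -- Gaussian moments
  have him : Integrable (fun t => t - mi) (μs i) := by
    rw [hμi]; exact integrable_sub_gaussian hv
  have hi2 : Integrable (fun t => (t - mi) ^ 2) (μs i) := by
    rw [hμi]; exact integrable_sq_sub_gaussian hv
  have hm1 : ∫ t, (t - mi) ∂(μs i) = 0 := by rw [hμi]; exact integral_sub_gaussian hv
  have hm2 : ∫ t, (t - mi) ^ 2 ∂(μs i) = (v : ℝ) := by
    rw [hμi]; exact integral_sq_sub_gaussian hv
  -- sections of f
  have hgx_cd : ∀ x : Fin d → ℝ, ContDiff ℝ 1 (fun t => f (Function.update x i t)) :=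
    fun x => hf.comp (contDiff_update 1 x i)
  have hgx_deriv : ∀ (x : Fin d → ℝ) (t : ℝ),
      pderivI f i (Function.update x i t) = deriv (fun t => f (Function.update x i t)) t := by
    intro x t
    simp only [pderivI, Function.update_idem, Function.update_self]
  have hlowx : ∀ x : Fin d → ℝ, ∀ s t : ℝ,
      c * |s - t| ≤ |f (Function.update x i s) - f (Function.update x i t)| := by
    intro x
    exact lip_lower hc ((hgx_cd x).differentiable one_ne_zero)
      ((hgx_cd x).continuous_deriv le_rfl)
      (fun t => by rw [← hgx_deriv x t]; exact hlow _)
  have huppx : ∀ x : Fin d → ℝ, ∀ s t : ℝ,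
      |f (Function.update x i s) - f (Function.update x i t)| ≤ C * |s - t| := by
    intro x
    exact lip_upper hC ((hgx_cd x).differentiable one_ne_zero)
      (fun t => by rw [← hgx_deriv x t]; exact hupp _)
  -- measure preserving refresh of coordinate i
  have hT := measurePreserving_update μs i
  set T : (Fin d → ℝ) × ℝ → (Fin d → ℝ) := fun p => Function.update p.1 i p.2 with hTdef
  set Pf : (Fin d → ℝ) → ℝ := fun x => ∫ t, f (Function.update x i t) ∂(μs i) with hPf
  have hfm : StronglyMeasurable f := hf.continuous.stronglyMeasurable
  have hFm : StronglyMeasurable (fun p : (Fin d → ℝ) × ℝ => f (Function.update p.1 i p.2)) :=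
    hfm.comp_measurable measurable_update'
  have hPfm : StronglyMeasurable Pf := hFm.integral_prod_right'
  have hu2m : StronglyMeasurable (fun x => (f x - Pf x) ^ 2) := by
    exact ((hfm.measurable.sub hPfm.measurable).pow_const 2).stronglyMeasurable
  have hPfT : ∀ (x : Fin d → ℝ) (t0 : ℝ), Pf (Function.update x i t0) = Pf x := by
    intro x t0
    simp only [hPf]
    exact integral_congr_ae (Filter.EventuallyEq.fun_comp
      (ae_of_all _ fun t => Function.update_idem ..) f) |>.symm ▸ rfl
  -- pointwise bound on u
  set κ : ℝ := ∫ s, |s - mi| ∂(μs i) with hκ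
  have hκ0 : 0 ≤ κ := by
    rw [hκ]; exact integral_nonneg fun s => abs_nonneg _
  have hub : ∀ x : Fin d → ℝ, |f x - Pf x| ≤ C * |x i - mi| + C * κ := by
    intro x
    have h := u_bound (ν := μs i) ((hgx_cd x).continuous) (huppx x) him hi2 (x i)
    simpa [hPf, hκ, Function.update_eq_self] using h
  -- eval coordinate pushforward
  have heval : Measure.map (fun x : Fin d → ℝ => x i) (Measure.pi μs) = μs i := by
    rw [← hT.map_eq, Measure.map_map (measurable_pi_apply i) measurable_update']
    have hcomp : ((fun x : Fin d → ℝ => x i) ∘ T) = Prod.snd :=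
      funext fun p => Function.update_self _ _ _
    rw [hcomp, Measure.map_snd_prod]
    simp
  have htransfer : ∀ h : ℝ → ℝ, Continuous h → Integrable h (μs i) →
      Integrable (fun x : Fin d → ℝ => h (x i)) (Measure.pi μs) := by
    intro h hcont hint
    have hint' : Integrable h (Measure.map (fun x : Fin d → ℝ => x i) (Measure.pi μs)) := by
      rw [heval]; exact hint
    exact (integrable_map_measure (by rw [heval]; exact hcont.aestronglyMeasurable)
      (measurable_pi_apply i).aemeasurable).mp hint'
  have hxi2 : Integrable (fun x : Fin d → ℝ => (x i - mi) ^ 2) (Measure.pi μs) :=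
    htransfer _ (by continuity) hi2
  -- integrability of u²
  have hu2int : Integrable (fun x => (f x - Pf x) ^ 2) (Measure.pi μs) := by
    refine Integrable.mono' ((hxi2.const_mul (2 * C ^ 2)).add
      (integrable_const (2 * C ^ 2 * κ ^ 2))) hu2m.aestronglyMeasurable
      (ae_of_all _ fun x => ?_)
    show |(f x - Pf x) ^ 2| ≤ 2 * C ^ 2 * (x i - mi) ^ 2 + 2 * C ^ 2 * κ ^ 2
    rw [abs_of_nonneg (sq_nonneg _)]
    have hA := pow_le_pow_left₀ (abs_nonneg (f x - Pf x)) (hub x) 2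
    nlinarith [sq_abs (f x - Pf x), sq_abs (x i - mi),
      sq_nonneg (C * |x i - mi| - C * κ), abs_nonneg (x i - mi)]
  -- transfer to the product measure
  have hmapT : Measure.map T ((Measure.pi μs).prod (μs i)) = Measure.pi μs := hT.map_eq
  have hint_prod : Integrable (fun p : (Fin d → ℝ) × ℝ =>
      (f (Function.update p.1 i p.2) - Pf p.1) ^ 2) ((Measure.pi μs).prod (μs i)) := by
    have h1 : Integrable ((fun x => (f x - Pf x) ^ 2) ∘ T) ((Measure.pi μs).prod (μs i)) := by
      refine (integrable_map_measure ?_ hT.measurable.aemeasurable).mp ?_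
      · rw [hmapT]; exact hu2m.aestronglyMeasurable
      · rw [hmapT]; exact hu2int
    refine h1.congr (ae_of_all _ fun p => ?_)
    show (f (T p) - Pf (T p)) ^ 2 = _
    rw [hPfT p.1 p.2]
  have hDT : DTotM μs f i = ∫ p : (Fin d → ℝ) × ℝ,
      (f (Function.update p.1 i p.2) - Pf p.1) ^ 2 ∂((Measure.pi μs).prod (μs i)) := by
    calc DTotM μs f i = ∫ x, (f x - Pf x) ^ 2 ∂(Measure.pi μs) := rfl
    _ = ∫ x, (f x - Pf x) ^ 2 ∂(Measure.map T ((Measure.pi μs).prod (μs i))) := by rw [hmapT]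
    _ = ∫ p : (Fin d → ℝ) × ℝ, (f (T p) - Pf (T p)) ^ 2 ∂((Measure.pi μs).prod (μs i)) := by
        rw [integral_map hT.measurable.aemeasurable (by rw [hmapT]; exact hu2m.aestronglyMeasurable)]
    _ = ∫ p : (Fin d → ℝ) × ℝ, (f (Function.update p.1 i p.2) - Pf p.1) ^ 2
          ∂((Measure.pi μs).prod (μs i)) := by
        refine integral_congr_ae (ae_of_all _ fun p => ?_)
        show (f (T p) - Pf (T p)) ^ 2 = _
        rw [hPfT p.1 p.2]
  have hfub : ∫ p : (Fin d → ℝ) × ℝ, (f (Function.update p.1 i p.2) - Pf p.1) ^ 2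
        ∂((Measure.pi μs).prod (μs i))
      = ∫ x, (∫ t, (f (Function.update x i t) - Pf x) ^ 2 ∂(μs i)) ∂(Measure.pi μs) :=
    integral_prod _ hint_prod
  have hinner : ∀ x : Fin d → ℝ, ∫ t, (f (Function.update x i t) - Pf x) ^ 2 ∂(μs i)
      = (∫ t, (f (Function.update x i t)) ^ 2 ∂(μs i)) - (Pf x) ^ 2 := by
    intro x
    have hint := integrable_of_lip (ν := μs i) ((hgx_cd x).continuous) (huppx x) him hi2
    exact inner_var hint.1 hint.2
  have hWint : Integrable
      (fun x => ∫ t, (f (Function.update x i t) - Pf x) ^ 2 ∂(μs i)) (Measure.pi μs) :=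
    hint_prod.integral_prod_left
  have hW : ∀ x : Fin d → ℝ,
      (v : ℝ) * c ^ 2 ≤ (∫ t, (f (Function.update x i t)) ^ 2 ∂(μs i)) - (Pf x) ^ 2 ∧
        (∫ t, (f (Function.update x i t)) ^ 2 ∂(μs i)) - (Pf x) ^ 2 ≤ (v : ℝ) * C ^ 2 :=
    fun x => var_sandwich ((hgx_cd x).continuous) hc hC (hlowx x) (huppx x) him hi2 hm1 hm2
  have hDTeq : DTotM μs f i
      = ∫ x, (∫ t, (f (Function.update x i t) - Pf x) ^ 2 ∂(μs i)) ∂(Measure.pi μs) :=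
    hDT.trans hfub
  have hDlo : (v : ℝ) * c ^ 2 ≤ DTotM μs f i := by
    rw [hDTeq]
    have hmono := integral_mono (μ := Measure.pi μs)
      (integrable_const ((v : ℝ) * c ^ 2)) hWint (fun x => by
        rw [hinner x]; exact (hW x).1)
    simpa [measure_univ] using hmono
  have hDhi : DTotM μs f i ≤ (v : ℝ) * C ^ 2 := by
    rw [hDTeq]
    have hmono := integral_mono (μ := Measure.pi μs)
      hWint (integrable_const ((v : ℝ) * C ^ 2)) (fun x => by
        rw [hinner x]; exact (hW x).2)
    simpa [measure_univ] using hmono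
  have hSTot : STotM μs f i = DTotM μs f i / totVarM μs f := rfl
  constructor
  · rw [hSTot]
    exact (div_le_div_iff_of_pos_right hD).mpr hDlo
  · rw [hSTot]
    exact (div_le_div_iff_of_pos_right hD).mpr hDhi
end
end

section
/- Fix i and suppose the i-th input is Gaussian with variance σ_i² > 0. Assume f ∈ L²(μ), ∂f/∂x_i ∈ L²(μ), and D > 0. Then S_i^tot ≤ σ_i² ν_i / D, where ν_i = ∫_{ℝ^d} (∂f/∂x_i)² dμ. -/
open MeasureTheory ProbabilityTheory
open scoped NNReal

noncomputable section

section AuxPoincare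

open Real Set Filter Function
open scoped ENNReal Topology

variable {m : ℝ} {v : ℝ≥0}

lemma hasDerivAt_gpdf (hv : v ≠ 0) (x : ℝ) :
    HasDerivAt (fun y => -(v : ℝ) * gaussianPDFReal m v y) ((x - m) * gaussianPDFReal m v x) x := by
  have hv' : (v : ℝ) ≠ 0 := by exact_mod_cast hv
  have hu : HasDerivAt (fun y : ℝ => -(y - m) ^ 2 / (2 * (v:ℝ))) (-(x - m) / v) x := by
    have h1 : HasDerivAt (fun y : ℝ => (y - m)) 1 x := (hasDerivAt_id x).sub_const m
    have h2 : HasDerivAt (fun y : ℝ => (y - m) ^ 2) (2 * (x - m)) x := by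
      simpa [mul_comm] using (h1.fun_pow 2)
    have := (h2.fun_neg).div_const (2 * (v:ℝ))
    refine this.congr_deriv ?_
    field_simp
  have hexp := (hu.exp).const_mul ((Real.sqrt (2 * π * v))⁻¹)
  have h := hexp.const_mul (-(v : ℝ))
  simp only [gaussianPDFReal]
  refine h.congr_deriv ?_
  field_simp

lemma sq_tendsto_atTop_of (hv : v ≠ 0) :
    Tendsto (fun x : ℝ => (x - m) ^ 2) atBot atTop := by
  have := (tendsto_pow_atTop (two_ne_zero)).comp
    (tendsto_neg_atBot_atTop.comp (tendsto_atBot_add_const_right _ (-m) tendsto_id))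
  have h2 : (fun x : ℝ => (m + -x) ^ 2) = (fun x : ℝ => (x - m)^2) := by
    funext x; ring
  simpa [Function.comp_def, h2] using this

lemma tendsto_gpdf_atTop (hv : v ≠ 0) :
    Tendsto (gaussianPDFReal m v) atTop (𝓝 0) := by
  have hv' : (0:ℝ) < v := lt_of_le_of_ne (by positivity) (by exact_mod_cast hv.symm)
  have h1 : Tendsto (fun x : ℝ => -(x - m) ^ 2 / (2 * (v:ℝ))) atTop atBot := by
    apply Tendsto.atBot_div_const (by positivity)
    apply tendsto_neg_atBot_iff.mpr
    exact (tendsto_pow_atTop (two_ne_zero)).comp (tendsto_atTop_add_const_right _ _ tendsto_id)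
  have := (Real.tendsto_exp_atBot.comp h1).const_mul ((Real.sqrt (2 * π * v))⁻¹)
  simpa [gaussianPDFReal_def] using this

lemma tendsto_gpdf_atBot (hv : v ≠ 0) :
    Tendsto (gaussianPDFReal m v) atBot (𝓝 0) := by
  have hv' : (0:ℝ) < v := lt_of_le_of_ne (by positivity) (by exact_mod_cast hv.symm)
  have h1 : Tendsto (fun x : ℝ => -(x - m) ^ 2 / (2 * (v:ℝ))) atBot atBot := by
    apply Tendsto.atBot_div_const (by positivity)
    exact tendsto_neg_atBot_iff.mpr (sq_tendsto_atTop_of hv)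
  have := (Real.tendsto_exp_atBot.comp h1).const_mul ((Real.sqrt (2 * π * v))⁻¹)
  simpa [gaussianPDFReal_def] using this

lemma integrable_sub_mul_gpdf (hv : v ≠ 0) :
    Integrable (fun x => (x - m) * gaussianPDFReal m v x) := by
  have hv' : (0:ℝ) < v := lt_of_le_of_ne (by positivity) (by exact_mod_cast hv.symm)
  have hb : (0:ℝ) < (2 * (v:ℝ))⁻¹ := by positivity
  have h0 : Integrable (fun s : ℝ => s * Real.exp (-(2 * (v:ℝ))⁻¹ * s ^ 2)) := by
    simpa using integrable_rpow_mul_exp_neg_mul_sq hb (s := 1) (by norm_num)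
  have h1 : Integrable (fun s : ℝ => (Real.sqrt (2 * π * v))⁻¹ * (s * Real.exp (-(2 * (v:ℝ))⁻¹ * s ^ 2))) :=
    h0.const_mul _
  have h2 := h1.comp_sub_right m
  apply h2.congr
  filter_upwards with x
  simp only [gaussianPDFReal]
  rw [show -(2 * (v:ℝ))⁻¹ * (x-m)^2 = -(x - m) ^ 2 / (2 * (v:ℝ)) by field_simp]
  ring

lemma ftc_cs_bound {g : ℝ → ℝ} (hg : ContDiff ℝ 1 g) (m x : ℝ) :
    ENNReal.ofReal ((g x - g m) ^ 2)
      ≤ ENNReal.ofReal |x - m| * ∫⁻ t in Set.uIoc m x, ENNReal.ofReal ((deriv g t) ^ 2) := by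
  have hdc : Continuous (deriv g) := hg.continuous_deriv le_rfl
  have hftc : ∫ t in m..x, deriv g t = g x - g m :=
    intervalIntegral.integral_deriv_eq_sub
      (fun t _ => (hg.differentiable one_ne_zero).differentiableAt)
      (hdc.intervalIntegrable m x)
  have habs : |g x - g m| ≤ ∫ t in Set.uIoc m x, |deriv g t| := by
    rw [← hftc]
    simpa [Real.norm_eq_abs] using
      intervalIntegral.norm_integral_le_integral_norm_uIoc (a := m) (b := x) (f := deriv g)
  have hint : IntegrableOn (fun t => |deriv g t|) (Set.uIoc m x) volume :=
    (hdc.abs.integrableOn_uIcc).mono_set Set.uIoc_subset_uIcc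
  have h1 : ENNReal.ofReal |g x - g m| ≤ ∫⁻ t in Set.uIoc m x, ENNReal.ofReal |deriv g t| := by
    rw [← ofReal_integral_eq_lintegral_ofReal hint (ae_of_all _ fun t => abs_nonneg _)]
    exact ENNReal.ofReal_le_ofReal habs
  -- Cauchy-Schwarz
  have hpq : Real.HolderConjugate 2 2 := Real.holderConjugate_iff.mpr ⟨one_lt_two, by norm_num⟩
  have hCS := ENNReal.lintegral_mul_le_Lp_mul_Lq (volume.restrict (Set.uIoc m x)) hpq
      (f := fun t => ENNReal.ofReal |deriv g t|) (g := fun _ => 1)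
      (ENNReal.measurable_ofReal.comp hdc.abs.measurable).aemeasurable aemeasurable_const
  simp only [mul_one, Pi.mul_apply, ENNReal.one_rpow, one_mul] at hCS
  have hBvol : volume (Set.uIoc m x) = ENNReal.ofReal |x - m| := by
    rw [Set.uIoc, Real.volume_Ioc, max_sub_min_eq_abs, abs_sub_comm]
  rw [setLIntegral_one, hBvol] at hCS
  set A := ∫⁻ t in Set.uIoc m x, (ENNReal.ofReal |deriv g t|) ^ (2:ℝ) with hA
  have hsq : (ENNReal.ofReal |g x - g m|) ^ (2:ℕ) ≤ A * ENNReal.ofReal |x - m| := by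
    calc (ENNReal.ofReal |g x - g m|) ^ (2:ℕ)
        ≤ ((∫⁻ t in Set.uIoc m x, ENNReal.ofReal |deriv g t|)) ^ (2:ℕ) :=
          pow_le_pow_left' h1 2
      _ ≤ (A ^ (1/2:ℝ) * (ENNReal.ofReal |x - m|) ^ (1/2:ℝ)) ^ (2:ℕ) :=
          pow_le_pow_left' hCS 2
      _ = A * ENNReal.ofReal |x - m| := by
          rw [mul_pow, ← ENNReal.rpow_natCast (A ^ (1/2:ℝ)) 2,
            ← ENNReal.rpow_natCast ((ENNReal.ofReal |x - m|) ^ (1/2:ℝ)) 2,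
            ← ENNReal.rpow_mul, ← ENNReal.rpow_mul]
          norm_num
  have hq : ∀ t : ℝ, (ENNReal.ofReal |deriv g t|) ^ (2:ℝ) = ENNReal.ofReal ((deriv g t) ^ 2) := by
    intro t
    rw [show (2:ℝ) = ((2:ℕ):ℝ) by norm_num, ENNReal.rpow_natCast,
      ← ENNReal.ofReal_pow (abs_nonneg _), sq_abs]
  have hAq : A = ∫⁻ t in Set.uIoc m x, ENNReal.ofReal ((deriv g t) ^ 2) := by
    rw [hA]; exact lintegral_congr fun t => hq t
  calc ENNReal.ofReal ((g x - g m) ^ 2)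
      = (ENNReal.ofReal |g x - g m|) ^ (2:ℕ) := by
        rw [← ENNReal.ofReal_pow (abs_nonneg _) 2, sq_abs]
    _ ≤ A * ENNReal.ofReal |x - m| := hsq
    _ = ENNReal.ofReal |x - m| * ∫⁻ t in Set.uIoc m x, ENNReal.ofReal ((deriv g t) ^ 2) := by
        rw [hAq, mul_comm]

lemma integral_Ioi_sub_mul_gpdf (hv : v ≠ 0) (t : ℝ) :
    ∫ x in Set.Ioi t, (x - m) * gaussianPDFReal m v x = (v:ℝ) * gaussianPDFReal m v t := by
  have h := integral_Ioi_of_hasDerivAt_of_tendsto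
    (f := fun y => -(v:ℝ) * gaussianPDFReal m v y)
    (f' := fun x => (x - m) * gaussianPDFReal m v x) (a := t)
    (((hasDerivAt_gpdf hv t).continuousAt).continuousWithinAt)
    (fun x _ => hasDerivAt_gpdf hv x)
    ((integrable_sub_mul_gpdf hv).integrableOn)
    (by simpa using (tendsto_gpdf_atTop (m := m) hv).const_mul (-(v:ℝ)))
  rw [h]; ring

lemma integral_Iic_sub_mul_gpdf (hv : v ≠ 0) (t : ℝ) :
    ∫ x in Set.Iic t, (m - x) * gaussianPDFReal m v x = (v:ℝ) * gaussianPDFReal m v t := by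
  have hint : IntegrableOn (fun x => (m - x) * gaussianPDFReal m v x) (Set.Iic t) volume := by
    apply Integrable.integrableOn
    have := (integrable_sub_mul_gpdf (m := m) hv).neg
    apply this.congr
    filter_upwards with x
    simp only [Pi.neg_apply]; ring
  have h := integral_Iic_of_hasDerivAt_of_tendsto
    (f := fun y => (v:ℝ) * gaussianPDFReal m v y)
    (f' := fun x => (m - x) * gaussianPDFReal m v x) (a := t)
    (by
      have h2 := ((hasDerivAt_gpdf (m := m) hv t).fun_neg).continuousAt.continuousWithinAt
        (s := Set.Iic t)
      simpa [neg_mul] using h2)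
    (fun x _ => by
      have h3 := (hasDerivAt_gpdf (m := m) hv x).fun_neg
      simp only [neg_mul, neg_neg] at h3
      convert h3 using 1
      ring)
    hint
    (by simpa using (tendsto_gpdf_atBot (m := m) hv).const_mul ((v:ℝ)))
  rw [h]; ring

lemma integrable_abs_mul_gpdf (hv : v ≠ 0) :
    Integrable (fun x => |x - m| * gaussianPDFReal m v x) := by
  have := (integrable_sub_mul_gpdf (m := m) hv).abs
  apply this.congr
  filter_upwards with x
  rw [abs_mul, abs_of_nonneg (gaussianPDFReal_nonneg m v x)]

lemma lint_weight (hv : v ≠ 0) (t : ℝ) :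
    ∫⁻ x, ({y : ℝ | t ∈ Set.uIoc m y}).indicator (fun _ => (1:ℝ≥0∞)) x
        * (ENNReal.ofReal |x - m| * gaussianPDF m v x) ∂volume
      = ENNReal.ofReal (v : ℝ) * gaussianPDF m v t := by
  have key : ∀ A : Set ℝ, MeasurableSet A →
      (∫ x in A, |x - m| * gaussianPDFReal m v x = (v:ℝ) * gaussianPDFReal m v t) →
      ({y : ℝ | t ∈ Set.uIoc m y} = A) →
      ∫⁻ x, ({y : ℝ | t ∈ Set.uIoc m y}).indicator (fun _ => (1:ℝ≥0∞)) x
        * (ENNReal.ofReal |x - m| * gaussianPDF m v x) ∂volume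
      = ENNReal.ofReal (v : ℝ) * gaussianPDF m v t := by
    intro A hA hI hset
    rw [hset]
    have h1 : ∀ x, A.indicator (fun _ => (1:ℝ≥0∞)) x
        * (ENNReal.ofReal |x - m| * gaussianPDF m v x)
        = A.indicator (fun x => ENNReal.ofReal (|x - m| * gaussianPDFReal m v x)) x := by
      intro x
      by_cases hx : x ∈ A
      · simp [hx, gaussianPDF, ENNReal.ofReal_mul (abs_nonneg _)]
      · simp [hx]
    simp_rw [h1]
    rw [lintegral_indicator hA,
      ← ofReal_integral_eq_lintegral_ofReal ((integrable_abs_mul_gpdf hv).integrableOn)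
        (ae_of_all _ fun x => mul_nonneg (abs_nonneg _) (gaussianPDFReal_nonneg m v x)),
      hI, ENNReal.ofReal_mul (NNReal.coe_nonneg v)]
    rfl
  rcases lt_trichotomy t m with htm | htm | htm
  · -- t < m : A = Iio t
    refine key (Set.Iio t) measurableSet_Iio ?_ ?_
    · have e1 : ∫ x in Set.Iio t, |x - m| * gaussianPDFReal m v x
          = ∫ x in Set.Iio t, (m - x) * gaussianPDFReal m v x :=
        setIntegral_congr_fun measurableSet_Iio
          (fun x (hx : x < t) => by rw [abs_of_neg (by linarith : x - m < 0)]; ring)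
      have e2 : ∫ x in Set.Iio t, (m - x) * gaussianPDFReal m v x
          = ∫ x in Set.Iic t, (m - x) * gaussianPDFReal m v x :=
        setIntegral_congr_set Iio_ae_eq_Iic
      rw [e1, e2]; exact integral_Iic_sub_mul_gpdf hv t
    · ext x
      simp only [Set.mem_setOf_eq, Set.mem_uIoc, Set.mem_Iio]
      constructor
      · rintro (⟨h1, h2⟩ | ⟨h1, h2⟩) <;> [linarith; exact h1]
      · intro h; right; exact ⟨h, le_of_lt htm⟩
  · -- t = m : A = Iio m
    subst htm
    refine key (Set.Iio t) measurableSet_Iio ?_ ?_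
    · have e1 : ∫ x in Set.Iio t, |x - t| * gaussianPDFReal t v x
          = ∫ x in Set.Iio t, (t - x) * gaussianPDFReal t v x :=
        setIntegral_congr_fun measurableSet_Iio
          (fun x (hx : x < t) => by rw [abs_of_neg (by linarith : x - t < 0)]; ring)
      have e2 : ∫ x in Set.Iio t, (t - x) * gaussianPDFReal t v x
          = ∫ x in Set.Iic t, (t - x) * gaussianPDFReal t v x :=
        setIntegral_congr_set Iio_ae_eq_Iic
      rw [e1, e2]; exact integral_Iic_sub_mul_gpdf hv t
    · ext x
      simp only [Set.mem_setOf_eq, Set.mem_uIoc, Set.mem_Iio]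
      constructor
      · rintro (⟨h1, h2⟩ | ⟨h1, h2⟩) <;> [linarith; exact h1]
      · intro h; right; exact ⟨h, le_refl t⟩
  · -- m < t : A = Ici t
    refine key (Set.Ici t) measurableSet_Ici ?_ ?_
    · have e1 : ∫ x in Set.Ici t, |x - m| * gaussianPDFReal m v x
          = ∫ x in Set.Ici t, (x - m) * gaussianPDFReal m v x :=
        setIntegral_congr_fun measurableSet_Ici
          (fun x (hx : t ≤ x) => by rw [abs_of_nonneg (by linarith : (0:ℝ) ≤ x - m)])
      rw [e1, integral_Ici_eq_integral_Ioi]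
      exact integral_Ioi_sub_mul_gpdf hv t
    · ext x
      simp only [Set.mem_setOf_eq, Set.mem_uIoc, Set.mem_Ici]
      constructor
      · rintro (⟨h1, h2⟩ | ⟨h1, h2⟩) <;> [exact h2; linarith]
      · intro h; left; exact ⟨htm, h⟩

lemma step_B (hv : v ≠ 0) {g : ℝ → ℝ} (hg : ContDiff ℝ 1 g) :
    ∫⁻ x, ENNReal.ofReal ((g x - g m) ^ 2) ∂(gaussianReal m v)
      ≤ ENNReal.ofReal (v:ℝ) * ∫⁻ t, ENNReal.ofReal (deriv g t ^ 2) ∂(gaussianReal m v) := by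
  have hγ : gaussianReal m v = volume.withDensity (gaussianPDF m v) :=
    gaussianReal_of_var_ne_zero m hv
  have hq : Measurable (fun t => ENNReal.ofReal (deriv g t ^ 2)) :=
    ENNReal.measurable_ofReal.comp ((hg.continuous_deriv le_rfl).pow 2).measurable
  set q : ℝ → ℝ≥0∞ := fun t => ENNReal.ofReal (deriv g t ^ 2) with hqdef
  have hS : MeasurableSet {p : ℝ × ℝ | p.2 ∈ Set.uIoc m p.1} := by
    simp only [Set.uIoc, Set.mem_Ioc, Set.setOf_and]
    exact (measurableSet_lt (measurable_const.min measurable_fst) measurable_snd).inter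
      (measurableSet_le measurable_snd (measurable_const.max measurable_fst))
  set K : ℝ → ℝ → ℝ≥0∞ := fun x t =>
    ({y : ℝ | t ∈ Set.uIoc m y}).indicator (fun _ => (1:ℝ≥0∞)) x
      * (ENNReal.ofReal |x - m| * gaussianPDF m v x) * q t with hKdef
  have hKmeas : Measurable (fun p : ℝ × ℝ => K p.1 p.2) := by
    apply Measurable.mul
    · apply Measurable.mul
      · have : (fun p : ℝ × ℝ => ({y : ℝ | p.2 ∈ Set.uIoc m y}).indicator
            (fun _ => (1:ℝ≥0∞)) p.1)
            = fun p : ℝ × ℝ => {p : ℝ × ℝ | p.2 ∈ Set.uIoc m p.1}.indicator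
              (fun _ => (1:ℝ≥0∞)) p := by
          funext p
          by_cases hp : p.2 ∈ Set.uIoc m p.1
          · simp [hp]
          · simp [hp]
        rw [this]
        exact measurable_const.indicator hS
      · exact (ENNReal.measurable_ofReal.comp
          ((measurable_fst.sub measurable_const).abs)).mul
          ((measurable_gaussianPDF m v).comp measurable_fst)
    · exact hq.comp measurable_snd
  calc ∫⁻ x, ENNReal.ofReal ((g x - g m) ^ 2) ∂(gaussianReal m v)
      = ∫⁻ x, gaussianPDF m v x * ENNReal.ofReal ((g x - g m) ^ 2) ∂volume := by
        have hgm : Measurable fun x => ENNReal.ofReal ((g x - g m) ^ 2) :=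
          (((hg.continuous.sub continuous_const).pow 2).measurable).ennreal_ofReal
        rw [hγ, lintegral_withDensity_eq_lintegral_mul volume (measurable_gaussianPDF m v) hgm]
        rfl
    _ ≤ ∫⁻ x, gaussianPDF m v x
          * (ENNReal.ofReal |x - m| * ∫⁻ t in Set.uIoc m x, q t) ∂volume := by
        apply lintegral_mono fun x => ?_
        exact mul_le_mul_right (ftc_cs_bound hg m x) _
    _ = ∫⁻ x, ∫⁻ t, K x t ∂volume ∂volume := by
        apply lintegral_congr fun x => ?_
        rw [← lintegral_indicator measurableSet_uIoc,
          ← lintegral_const_mul _ (hq.indicator measurableSet_uIoc),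
          ← lintegral_const_mul _ (measurable_const.fun_mul (hq.indicator measurableSet_uIoc))]
        apply lintegral_congr fun t => ?_
        by_cases ht : t ∈ Set.uIoc m x
        · have hx : x ∈ {y : ℝ | t ∈ Set.uIoc m y} := ht
          simp only [hKdef, Set.indicator_of_mem ht, Set.indicator_of_mem hx, one_mul]
          ring
        · have hx : x ∉ {y : ℝ | t ∈ Set.uIoc m y} := ht
          simp [hKdef, Set.indicator_of_notMem ht, Set.indicator_of_notMem hx]
    _ = ∫⁻ t, ∫⁻ x, K x t ∂volume ∂volume := lintegral_lintegral_swap hKmeas.aemeasurable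
    _ = ∫⁻ t, q t * (ENNReal.ofReal (v:ℝ) * gaussianPDF m v t) ∂volume := by
        apply lintegral_congr fun t => ?_
        simp only [hKdef]
        rw [lintegral_mul_const' (q t) _ (by simp [hqdef]), lint_weight hv t, mul_comm]
    _ = ENNReal.ofReal (v:ℝ) * ∫⁻ t, q t ∂(gaussianReal m v) := by
        rw [hγ, lintegral_withDensity_eq_lintegral_mul volume (measurable_gaussianPDF m v) hq]
        simp only [Pi.mul_apply]
        rw [← lintegral_const_mul _ ((measurable_gaussianPDF m v).fun_mul hq)]
        apply lintegral_congr fun t => ?_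
        ring

lemma integrable_of_lint {γ : Measure ℝ} {h : ℝ → ℝ} (hmeas : AEStronglyMeasurable h γ)
    (hnn : ∀ x, 0 ≤ h x) (hfin : ∫⁻ x, ENNReal.ofReal (h x) ∂γ ≠ ⊤) : Integrable h γ :=
  ⟨hmeas, (hasFiniteIntegral_iff_ofReal (ae_of_all _ hnn)).mpr hfin.lt_top⟩

/-- One-dimensional Gaussian Poincaré inequality, in `lintegral` form. -/
lemma gaussian_poincare (m : ℝ) (v : ℝ≥0) (hv : v ≠ 0) (g : ℝ → ℝ)
    (hg : ContDiff ℝ 1 g)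
    (hg2 : ∫⁻ t, ENNReal.ofReal (g t ^ 2) ∂(gaussianReal m v) ≠ ⊤) :
    ∫⁻ t, ENNReal.ofReal ((g t - ∫ s, g s ∂(gaussianReal m v)) ^ 2) ∂(gaussianReal m v)
      ≤ ENNReal.ofReal (v:ℝ) * ∫⁻ t, ENNReal.ofReal (deriv g t ^ 2) ∂(gaussianReal m v) := by
  set γ := gaussianReal m v with hγdef
  refine le_trans ?_ (step_B hv hg)
  -- step A
  by_cases hmid : ∫⁻ x, ENNReal.ofReal ((g x - g m) ^ 2) ∂γ = ⊤
  · rw [hmid]; exact le_top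
  have hgsq_int : Integrable (fun t => g t ^ 2) γ :=
    integrable_of_lint ((hg.continuous.pow 2).aestronglyMeasurable)
      (fun x => sq_nonneg _) hg2
  have hg_int : Integrable g γ := by
    refine Integrable.mono' ((hgsq_int.add (integrable_const 1)).div_const 2)
      hg.continuous.aestronglyMeasurable (ae_of_all _ fun x => ?_)
    rw [Real.norm_eq_abs]
    rw [Pi.add_apply]
    nlinarith [sq_nonneg (|g x| - 1), sq_abs (g x)]
  have hmid_int : Integrable (fun x => (g x - g m) ^ 2) γ :=
    integrable_of_lint (((hg.continuous.sub continuous_const).pow 2).aestronglyMeasurable)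
      (fun x => sq_nonneg _) hmid
  set E := ∫ s, g s ∂γ with hE
  have hE_int : Integrable (fun x => (g x - E) ^ 2) γ := by
    have : (fun x => (g x - E) ^ 2) = fun x => g x ^ 2 - 2 * E * g x + E ^ 2 := by
      funext x; ring
    rw [this]
    exact ((hgsq_int.sub ((hg_int.const_mul (2 * E)))).add (integrable_const _))
  have hreal : ∫ x, (g x - E) ^ 2 ∂γ ≤ ∫ x, (g x - g m) ^ 2 ∂γ := by
    have expand : ∀ c : ℝ, Integrable (fun x => (g x - c) ^ 2) γ →
        ∫ x, (g x - c) ^ 2 ∂γ = ∫ x, g x ^ 2 ∂γ - 2 * c * E + c ^ 2 := by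
      intro c hc
      calc ∫ x, (g x - c) ^ 2 ∂γ
          = ∫ x, ((g x ^ 2 - 2 * c * g x) + c ^ 2) ∂γ := by
            apply integral_congr_ae; filter_upwards with x; ring
        _ = (∫ x, (g x ^ 2 - 2 * c * g x) ∂γ) + ∫ _x, (c ^ 2 : ℝ) ∂γ :=
            integral_add (hgsq_int.sub (hg_int.const_mul (2 * c))) (integrable_const _)
        _ = (∫ x, g x ^ 2 ∂γ) - (∫ x, 2 * c * g x ∂γ) + c ^ 2 := by
            rw [integral_sub hgsq_int (hg_int.const_mul (2 * c))]
            simp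
        _ = ∫ x, g x ^ 2 ∂γ - 2 * c * E + c ^ 2 := by
            rw [integral_const_mul (2 * c) g]
    rw [expand E hE_int, expand (g m) hmid_int]
    nlinarith [sq_nonneg (E - g m)]
  rw [← ofReal_integral_eq_lintegral_ofReal hE_int (ae_of_all _ fun x => sq_nonneg _),
    ← ofReal_integral_eq_lintegral_ofReal hmid_int (ae_of_all _ fun x => sq_nonneg _)]
  exact ENNReal.ofReal_le_ofReal hreal

section Product
open Function

variable {d : ℕ} (μs : Fin d → Measure ℝ)

lemma measurable_updateFun (i : Fin d) :
    Measurable (fun p : (Fin d → ℝ) × ℝ => Function.update p.1 i p.2) := by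
  apply measurable_pi_lambda _ fun j => ?_
  simp only [Function.update_apply]
  by_cases hj : j = i
  · simp only [hj, if_pos rfl]; exact measurable_snd
  · simp only [if_neg hj]; exact (measurable_pi_apply j).comp measurable_fst

lemma measurePreserving_update [∀ j, IsProbabilityMeasure (μs j)] (i : Fin d) :
    MeasurePreserving (fun p : (Fin d → ℝ) × ℝ => Function.update p.1 i p.2)
      ((Measure.pi μs).prod (μs i)) (Measure.pi μs) := by
  refine ⟨measurable_updateFun i, ?_⟩
  refine (Measure.pi_eq fun s hs => ?_).symm
  rw [Measure.map_apply (measurable_updateFun i) (MeasurableSet.univ_pi hs)]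
  have hpre : (fun p : (Fin d → ℝ) × ℝ => Function.update p.1 i p.2) ⁻¹' (Set.pi Set.univ s)
      = (Set.pi Set.univ (Function.update s i Set.univ)) ×ˢ (s i) := by
    ext p
    simp only [Set.mem_preimage, Set.mem_pi, Set.mem_univ, true_implies, Set.mem_prod]
    constructor
    · intro h
      refine ⟨fun j => ?_, by simpa using h i⟩
      rcases eq_or_ne j i with rfl | hj
      · simp
      · have := h j
        rw [Function.update_of_ne hj] at this ⊢
        exact this
    · rintro ⟨h1, h2⟩ j
      rcases eq_or_ne j i with rfl | hj
      · simpa using h2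
      · have := h1 j
        rw [Function.update_of_ne hj] at this ⊢
        exact this
  rw [hpre, Measure.prod_prod, Measure.pi_pi]
  have : ∀ j, μs j (Function.update s i Set.univ j)
      = Function.update (fun j => μs j (s j)) i 1 j := by
    intro j
    rcases eq_or_ne j i with rfl | hj
    · simp
    · rw [Function.update_of_ne hj, Function.update_of_ne hj]
  rw [Finset.prod_congr rfl (fun j _ => this j),
    Finset.prod_update_of_mem (Finset.mem_univ i), one_mul,
    ← Finset.mul_prod_erase Finset.univ _ (Finset.mem_univ i), mul_comm,
    Finset.sdiff_singleton_eq_erase]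

end Product

section Pderiv

variable {d : ℕ} {f : (Fin d → ℝ) → ℝ}

lemma hasDerivAt_slice (hf : ContDiff ℝ 1 f) (i : Fin d) (x : Fin d → ℝ) (t : ℝ) :
    HasDerivAt (fun t : ℝ => f (Function.update x i t))
      (fderiv ℝ f (Function.update x i t) (Pi.single i 1)) t := by
  set e : Fin d → ℝ := Pi.single i 1 with he
  have hupd : (fun s : ℝ => Function.update x i s)
      = fun s : ℝ => Function.update x i 0 + s • e := by
    funext s j
    rcases eq_or_ne j i with rfl | hj
    · simp [he]
    · simp [Function.update_of_ne hj, he, Pi.single_apply, hj]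
  have hAff : HasDerivAt (fun s : ℝ => Function.update x i 0 + s • e) e t := by
    simpa using ((hasDerivAt_id t).smul_const e).const_add (Function.update x i 0)
  rw [← hupd] at hAff
  have hcomp := ((hf.differentiable one_ne_zero) (Function.update x i t)).hasFDerivAt.comp_hasDerivAt
    t hAff
  exact hcomp

lemma pderivI_eq_fderiv (hf : ContDiff ℝ 1 f) (i : Fin d) (x : Fin d → ℝ) :
    pderivI f i x = fderiv ℝ f x (Pi.single i 1) := by
  rw [pderivI, (hasDerivAt_slice hf i x (x i)).deriv, Function.update_eq_self]

lemma continuous_pderivI (hf : ContDiff ℝ 1 f) (i : Fin d) :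
    Continuous (pderivI f i) := by
  have : pderivI f i = fun x => fderiv ℝ f x (Pi.single i 1) := by
    funext x; exact pderivI_eq_fderiv hf i x
  rw [this]
  exact (hf.continuous_fderiv one_ne_zero).clm_apply continuous_const

lemma pderivI_update (i : Fin d) (x : Fin d → ℝ) (t : ℝ) :
    pderivI f i (Function.update x i t)
      = deriv (fun s : ℝ => f (Function.update x i s)) t := by
  simp only [pderivI, Function.update_idem, Function.update_self]

end Pderiv

end AuxPoincare

/-- **Theorem 8 (upper bound for a normal input).** For independent inputs where the `i`-th
input is Gaussian with variance `σ_i² > 0`, and `f, ∂f/∂x_i ∈ L²(μ)` with `D > 0`, one has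
`S_i^tot ≤ σ_i² ν_i / D`. -/
theorem dgsm_upper_bound_normal (d : ℕ) (μs : Fin d → Measure ℝ)
    (hprob : ∀ j, IsProbabilityMeasure (μs j)) (i : Fin d)
    (mi : ℝ) (v : ℝ≥0) (hv : v ≠ 0) (hμi : μs i = gaussianReal mi v)
    (f : (Fin d → ℝ) → ℝ) (hf : ContDiff ℝ 1 f)
    (hfL2 : MemLp f 2 (Measure.pi μs))
    (hdL2 : MemLp (pderivI f i) 2 (Measure.pi μs))
    (hD : 0 < totVarM μs f) :
    STotM μs f i ≤ (v : ℝ) * nuM μs f i / totVarM μs f := by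
  haveI : ∀ j, IsProbabilityMeasure (μs j) := hprob
  set π := Measure.pi μs with hπ
  set P : (Fin d → ℝ) → ℝ := fun x => ∫ t, f (Function.update x i t) ∂(μs i) with hP
  have hcont_upd : Continuous (fun p : (Fin d → ℝ) × ℝ => f (Function.update p.1 i p.2)) :=
    hf.continuous.comp (continuous_fst.update i continuous_snd)
  have hP_sm : StronglyMeasurable P := hcont_upd.stronglyMeasurable.integral_prod_right'
  have hu_meas : Measurable (uCompM μs f i) := hf.continuous.measurable.sub hP_sm.measurable
  set F₁ : (Fin d → ℝ) → ENNReal := fun y => ENNReal.ofReal (uCompM μs f i y ^ 2) with hF₁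
  set F₂ : (Fin d → ℝ) → ENNReal := fun y => ENNReal.ofReal (pderivI f i y ^ 2) with hF₂
  set F₃ : (Fin d → ℝ) → ENNReal := fun y => ENNReal.ofReal (f y ^ 2) with hF₃
  have hF1m : Measurable F₁ := (hu_meas.pow_const 2).ennreal_ofReal
  have hF2m : Measurable F₂ :=
    (((continuous_pderivI hf i).pow 2).measurable).ennreal_ofReal
  have hF3m : Measurable F₃ := ((hf.continuous.pow 2).measurable).ennreal_ofReal
  have hMP := measurePreserving_update μs i
  have fub : ∀ F : (Fin d → ℝ) → ENNReal, Measurable F →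
      ∫⁻ y, F y ∂π = ∫⁻ x, ∫⁻ t, F (Function.update x i t) ∂(μs i) ∂π := by
    intro F hF
    rw [← hMP.lintegral_comp hF]
    exact lintegral_prod _ ((hF.comp (measurable_updateFun i)).aemeasurable)
  have sq_fin : ∀ h : (Fin d → ℝ) → ℝ, MemLp h 2 π →
      ∫⁻ y, ENNReal.ofReal (h y ^ 2) ∂π ≠ ⊤ := by
    intro h hh
    exact ((hasFiniteIntegral_iff_ofReal (ae_of_all _ fun x => sq_nonneg (h x))).mp
      hh.integrable_sq.2).ne
  have hfin3 : ∫⁻ y, F₃ y ∂π ≠ ⊤ := sq_fin f hfL2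
  have hfin2 : ∫⁻ y, F₂ y ∂π ≠ ⊤ := sq_fin (pderivI f i) hdL2
  have hinner3_meas : Measurable fun x => ∫⁻ t, F₃ (Function.update x i t) ∂(μs i) :=
    (hF3m.comp (measurable_updateFun i)).lintegral_prod_right'
  have hae : ∀ᵐ x ∂π, (∫⁻ t, F₃ (Function.update x i t) ∂(μs i)) ≠ ⊤ := by
    have h := ae_lt_top hinner3_meas (by rw [← fub F₃ hF3m]; exact hfin3)
    filter_upwards [h] with x hx using hx.ne
  have key : ∀ x : Fin d → ℝ, (∫⁻ t, F₃ (Function.update x i t) ∂(μs i)) ≠ ⊤ →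
      ∫⁻ t, F₁ (Function.update x i t) ∂(μs i)
        ≤ ENNReal.ofReal (v:ℝ) * ∫⁻ t, F₂ (Function.update x i t) ∂(μs i) := by
    intro x hx
    set g : ℝ → ℝ := fun t => f (Function.update x i t) with hg
    have hgC : ContDiff ℝ 1 g := hf.comp (contDiff_update 1 x i)
    have h2 : ∫⁻ t, ENNReal.ofReal (g t ^ 2) ∂(gaussianReal mi v) ≠ ⊤ := by
      rw [← hμi]; exact hx
    have hpoinc := gaussian_poincare mi v hv g hgC h2
    have hF1g : ∀ t, F₁ (Function.update x i t)
        = ENNReal.ofReal ((g t - ∫ s, g s ∂(μs i)) ^ 2) := by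
      intro t
      have huc : uCompM μs f i (Function.update x i t) = g t - ∫ s, g s ∂(μs i) := by
        simp only [uCompM, hg, Function.update_idem]
      simp only [hF₁, huc]
    have hF2g : ∀ t, F₂ (Function.update x i t) = ENNReal.ofReal (deriv g t ^ 2) := by
      intro t
      simp only [hF₂]
      rw [pderivI_update]
    calc ∫⁻ t, F₁ (Function.update x i t) ∂(μs i)
        = ∫⁻ t, ENNReal.ofReal ((g t - ∫ s, g s ∂(μs i)) ^ 2) ∂(μs i) :=
          lintegral_congr hF1g
      _ = ∫⁻ t, ENNReal.ofReal ((g t - ∫ s, g s ∂(gaussianReal mi v)) ^ 2)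
            ∂(gaussianReal mi v) := by rw [hμi]
      _ ≤ ENNReal.ofReal (v:ℝ)
            * ∫⁻ t, ENNReal.ofReal (deriv g t ^ 2) ∂(gaussianReal mi v) := hpoinc
      _ = ENNReal.ofReal (v:ℝ) * ∫⁻ t, ENNReal.ofReal (deriv g t ^ 2) ∂(μs i) := by
          rw [hμi]
      _ = ENNReal.ofReal (v:ℝ) * ∫⁻ t, F₂ (Function.update x i t) ∂(μs i) :=
          congrArg _ (lintegral_congr fun t => (hF2g t).symm)
  have L1 : ∫⁻ y, F₁ y ∂π ≤ ENNReal.ofReal (v:ℝ) * ∫⁻ y, F₂ y ∂π := by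
    rw [fub F₁ hF1m, fub F₂ hF2m]
    calc ∫⁻ x, ∫⁻ t, F₁ (Function.update x i t) ∂(μs i) ∂π
        ≤ ∫⁻ x, ENNReal.ofReal (v:ℝ) * ∫⁻ t, F₂ (Function.update x i t) ∂(μs i) ∂π :=
          lintegral_mono_ae (hae.mono fun x hx => key x hx)
      _ = ENNReal.ofReal (v:ℝ) * ∫⁻ x, ∫⁻ t, F₂ (Function.update x i t) ∂(μs i) ∂π :=
          lintegral_const_mul _ ((hF2m.comp (measurable_updateFun i)).lintegral_prod_right')
  have hDT : DTotM μs f i = (∫⁻ y, F₁ y ∂π).toReal := by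
    rw [DTotM, integral_eq_lintegral_of_nonneg_ae (ae_of_all _ fun x => sq_nonneg _)
      ((hu_meas.pow_const 2).aestronglyMeasurable)]
  have hnu : nuM μs f i = (∫⁻ y, F₂ y ∂π).toReal := by
    rw [nuM, integral_eq_lintegral_of_nonneg_ae (ae_of_all _ fun x => sq_nonneg _)
      ((((continuous_pderivI hf i).pow 2).measurable).aestronglyMeasurable)]
  have hkey : DTotM μs f i ≤ (v:ℝ) * nuM μs f i := by
    rw [hDT, hnu]
    have h := ENNReal.toReal_mono (ENNReal.mul_ne_top ENNReal.ofReal_ne_top hfin2) L1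
    rwa [ENNReal.toReal_mul, ENNReal.toReal_ofReal v.coe_nonneg] at h
  rw [STotM]
  gcongr
end
end

section
/- Fix i ∈ {1,…,d} and let a, b : [0,1]^d → ℝ be continuous functions that do not depend on the i-th coordinate (i.e. a(x) and b(x) are unchanged when the i-th coordinate of x is replaced by any t ∈ [0,1]). Let f(x) = a(x)·x_i + b(x). Then D_i^tot = (1/12)∫_{H^d} a(x)² dx, the DGSM ν_i = ∫_{H^d} a(x)² dx, and ς_i = (1/2)∫_{H^d} x_i(1−x_i) a(x)² dx = D_i^tot; in particular the upper bound UB2 is attained with equality: ς_i = D_i^tot. -/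
open MeasureTheory Real

noncomputable section

/-- The unit cube `[0,1]^d` in `ℝ^d`. -/
def unitCube (d : ℕ) : Set (Fin d → ℝ) := Set.Icc 0 1

/-- `u_i(x) = f(x) - ∫₀¹ f(x₁,…,x_{i-1},t,x_{i+1},…,x_d) dt`, the sum of all ANOVA
terms of `f` depending on `x_i`. -/
def uComp {d : ℕ} (f : (Fin d → ℝ) → ℝ) (i : Fin d) (x : Fin d → ℝ) : ℝ :=
  f x - ∫ t in (0:ℝ)..1, f (Function.update x i t)

/-- The total variance `D = ∫ f² dx − (∫ f dx)²` over the unit cube. -/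
def totVar {d : ℕ} (f : (Fin d → ℝ) → ℝ) : ℝ :=
  (∫ x in unitCube d, (f x) ^ 2) - (∫ x in unitCube d, f x) ^ 2

/-- The total partial variance `D_i^tot = ∫ u_i² dx`. -/
def DTot {d : ℕ} (f : (Fin d → ℝ) → ℝ) (i : Fin d) : ℝ :=
  ∫ x in unitCube d, (uComp f i x) ^ 2

/-- The total Sobol' sensitivity index `S_i^tot = D_i^tot / D`. -/
def STot {d : ℕ} (f : (Fin d → ℝ) → ℝ) (i : Fin d) : ℝ :=
  DTot f i / totVar f

/-- The DGSM `ν_i = ∫ (∂f/∂x_i)² dx`. -/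
def nuDGSM {d : ℕ} (f : (Fin d → ℝ) → ℝ) (i : Fin d) : ℝ :=
  ∫ x in unitCube d, (pderivI f i x) ^ 2

/-- The DGSM `w_i^{(m)} = ∫ x_i^m (∂f/∂x_i) dx`. -/
def wDGSM {d : ℕ} (f : (Fin d → ℝ) → ℝ) (i : Fin d) (m : ℝ) : ℝ :=
  ∫ x in unitCube d, (x i) ^ m * pderivI f i x

/-- The DGSM `ς_i = (1/2) ∫ x_i (1 - x_i) (∂f/∂x_i)² dx`. -/
def sigmaDGSM {d : ℕ} (f : (Fin d → ℝ) → ℝ) (i : Fin d) : ℝ :=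
  (1 / 2) * ∫ x in unitCube d, x i * (1 - x i) * (pderivI f i x) ^ 2

lemma cube_factor {n : ℕ} (i : Fin (n + 1)) (a : (Fin (n + 1) → ℝ) → ℝ)
    (hai : ∀ (x : Fin (n + 1) → ℝ) (t : ℝ), a (Function.update x i t) = a x)
    (g : ℝ → ℝ) :
    ∫ x in unitCube (n + 1), g (x i) * a x ^ 2 =
      (∫ t in Set.Icc (0:ℝ) 1, g t) *
        ∫ y in Set.Icc (0 : Fin n → ℝ) 1, (a (i.insertNth 0 y)) ^ 2 := by
  set e := MeasurableEquiv.piFinSuccAbove (fun _ : Fin (n + 1) => ℝ) i with he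
  have hmp : MeasurePreserving e volume volume :=
    volume_preserving_piFinSuccAbove (fun _ : Fin (n + 1) => ℝ) i
  set G : ℝ × (Fin n → ℝ) → ℝ := fun p => g p.1 * (a (i.insertNth 0 p.2)) ^ 2 with hG
  have hset : unitCube (n + 1) = e ⁻¹' (Set.Icc (0:ℝ) 1 ×ˢ Set.Icc (0 : Fin n → ℝ) 1) := by
    ext x
    simp only [unitCube, Set.mem_Icc, Set.mem_preimage, Set.mem_prod, he,
      MeasurableEquiv.piFinSuccAbove_apply, Fin.insertNthEquiv_symm_apply, Pi.le_def,
      Fin.removeNth]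
    rw [Fin.forall_iff_succAbove i, Fin.forall_iff_succAbove i]
    tauto
  have hcomp : ∀ x : Fin (n + 1) → ℝ, G (e x) = g (x i) * a x ^ 2 := by
    intro x
    simp only [hG, he, MeasurableEquiv.piFinSuccAbove_apply, Fin.insertNthEquiv_symm_apply]
    rw [Fin.insertNth_removeNth, hai]
  calc ∫ x in unitCube (n + 1), g (x i) * a x ^ 2
      = ∫ x in e ⁻¹' (Set.Icc (0:ℝ) 1 ×ˢ Set.Icc (0 : Fin n → ℝ) 1), G (e x) := by
        rw [← hset]; exact setIntegral_congr_fun (by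
          rw [hset]; exact e.measurable (measurableSet_Icc.prod measurableSet_Icc))
          (fun x _ => (hcomp x).symm)
    _ = ∫ p in Set.Icc (0:ℝ) 1 ×ˢ Set.Icc (0 : Fin n → ℝ) 1, G p :=
        hmp.setIntegral_preimage_emb e.measurableEmbedding G _
    _ = (∫ t in Set.Icc (0:ℝ) 1, g t) *
          ∫ y in Set.Icc (0 : Fin n → ℝ) 1, (a (i.insertNth 0 y)) ^ 2 := by
        rw [show (volume : Measure (ℝ × (Fin n → ℝ))) = volume.prod volume from rfl]
        exact setIntegral_prod_mul g (fun y => (a (i.insertNth 0 y)) ^ 2) _ _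

/-- **Example 1 (function linear in `x_i`).** For `f(x) = a(x)·x_i + b(x)` with `a, b`
continuous and independent of the `i`-th coordinate, one has
`D_i^tot = (1/12)∫ a²`, `ν_i = ∫ a²`, `ς_i = (1/2)∫ x_i(1−x_i) a(x)² dx`, and the upper
bound UB2 is attained with equality: `ς_i = D_i^tot`. -/
theorem linear_in_xi_dgsm (d : ℕ) (i : Fin d) (a b : (Fin d → ℝ) → ℝ)
    (haC : Continuous a) (hbC : Continuous b)
    (hai : ∀ (x : Fin d → ℝ) (t : ℝ), a (Function.update x i t) = a x)
    (hbi : ∀ (x : Fin d → ℝ) (t : ℝ), b (Function.update x i t) = b x) :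
    DTot (fun x => a x * x i + b x) i = (1 / 12) * ∫ x in unitCube d, (a x) ^ 2 ∧
      nuDGSM (fun x => a x * x i + b x) i = ∫ x in unitCube d, (a x) ^ 2 ∧
      sigmaDGSM (fun x => a x * x i + b x) i =
        (1 / 2) * ∫ x in unitCube d, x i * (1 - x i) * (a x) ^ 2 ∧
      sigmaDGSM (fun x => a x * x i + b x) i = DTot (fun x => a x * x i + b x) i := by
  obtain ⟨n, rfl⟩ : ∃ n, d = n + 1 := ⟨d - 1, by have := i.pos; omega⟩
  set f : (Fin (n + 1) → ℝ) → ℝ := fun x => a x * x i + b x with hf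
  -- partial derivative is `a x`
  have hpd : ∀ x, pderivI f i x = a x := by
    intro x
    have h1 : (fun t : ℝ => f (Function.update x i t)) = fun t => a x * t + b x := by
      funext t
      simp [hf, hai, hbi, Function.update_self]
    have h2 : HasDerivAt (fun t => a x * t + b x) (a x) (x i) := by
      simpa using (((hasDerivAt_id (x i)).const_mul (a x)).add_const (b x))
    rw [pderivI, h1, h2.deriv]
  -- `u_i`
  have hu : ∀ x, uComp f i x = a x * (x i - 1 / 2) := by
    intro x
    have h1 : (∫ t in (0:ℝ)..1, f (Function.update x i t)) = a x * (1 / 2) + b x := by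
      have : (fun t : ℝ => f (Function.update x i t)) = fun t => a x * t + b x := by
        funext t; simp [hf, hai, hbi, Function.update_self]
      rw [this, intervalIntegral.integral_add
        (Continuous.intervalIntegrable (by continuity : Continuous fun t : ℝ => a x * t) _ _)
        intervalIntegrable_const, intervalIntegral.integral_const_mul, integral_id]
      norm_num
    rw [uComp, h1, hf]; ring
  -- 1-dimensional integrals
  have int1 : (∫ t in Set.Icc (0:ℝ) 1, (1:ℝ)) = 1 := by simp
  have int2 : (∫ t in Set.Icc (0:ℝ) 1, (t - 1 / 2) ^ 2) = 1 / 12 := by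
    rw [integral_Icc_eq_integral_Ioc, ← intervalIntegral.integral_of_le zero_le_one]
    have : ∀ t : ℝ, (t - 1 / 2) ^ 2 = t ^ 2 - t + 1 / 4 := fun t => by ring
    simp_rw [this]
    rw [intervalIntegral.integral_add
        (Continuous.intervalIntegrable (by continuity : Continuous fun t : ℝ => t ^ 2 - t) _ _)
        intervalIntegrable_const,
      intervalIntegral.integral_sub ((continuous_pow 2).intervalIntegrable _ _)
        (Continuous.intervalIntegrable (by continuity : Continuous fun t : ℝ => t) _ _),
      integral_pow, integral_id]
    norm_num
  have int3 : (∫ t in Set.Icc (0:ℝ) 1, t * (1 - t)) = 1 / 6 := by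
    rw [integral_Icc_eq_integral_Ioc, ← intervalIntegral.integral_of_le zero_le_one]
    have : ∀ t : ℝ, t * (1 - t) = t - t ^ 2 := fun t => by ring
    simp_rw [this]
    rw [intervalIntegral.integral_sub
        (Continuous.intervalIntegrable (by continuity : Continuous fun t : ℝ => t) _ _)
        ((continuous_pow 2).intervalIntegrable _ _), integral_pow, integral_id]
    norm_num
  -- factorization
  set I : ℝ := ∫ y in Set.Icc (0 : Fin n → ℝ) 1, (a (i.insertNth 0 y)) ^ 2 with hI
  have keyg := fun g => cube_factor i a hai g
  have hIa : (∫ x in unitCube (n + 1), (a x) ^ 2) = I := by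
    have := keyg (fun _ => (1:ℝ))
    simpa [int1] using this
  have hDTot : DTot f i = (1 / 12) * ∫ x in unitCube (n + 1), (a x) ^ 2 := by
    rw [DTot, hIa]
    have h1 : ∀ x : Fin (n + 1) → ℝ, (uComp f i x) ^ 2 = ((x i - 1 / 2) ^ 2) * a x ^ 2 := by
      intro x; rw [hu]; ring
    simp_rw [h1]
    have h3 : (∫ x in unitCube (n + 1), ((x i - 1 / 2) ^ 2) * a x ^ 2) =
        (∫ t in Set.Icc (0:ℝ) 1, (t - 1 / 2) ^ 2) * I := keyg (fun t => (t - 1 / 2) ^ 2)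
    rw [h3, int2]
  have hnu : nuDGSM f i = ∫ x in unitCube (n + 1), (a x) ^ 2 := by
    rw [nuDGSM]; simp_rw [hpd]
  have hsig : sigmaDGSM f i = (1 / 2) * ∫ x in unitCube (n + 1), x i * (1 - x i) * (a x) ^ 2 := by
    rw [sigmaDGSM]; simp_rw [hpd]
  refine ⟨hDTot, hnu, hsig, ?_⟩
  rw [hsig, hDTot, hIa]
  have h3 : (∫ x in unitCube (n + 1), x i * (1 - x i) * a x ^ 2) =
      (∫ t in Set.Icc (0:ℝ) 1, t * (1 - t)) * I := keyg (fun t => t * (1 - t))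
  rw [h3, int3]
  ring
end
end
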